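/- For any positive integers d1, d2, one has C(d1, ⌊d1/2⌋) · C(d2, ⌊d2/2⌋) ≤ (2/3) · C(d1+d2, ⌊(d1+d2)/2⌋), where C(n,k) denotes the binomial coefficient. -/

import Mathlib

open Finset

private lemma two_term (m n k i j : ℕ) (hi : i ≤ k) (hj : j ≤ k) (hne : i ≠ j) :
    m.choose i * n.choose (k - i) + m.choose j * n.choose (k - j) ≤ (m + n).choose k := by
  rw [Nat.add_choose_eq]
  have hsub : ({(i, k - i), (j, k - j)} : Finset (ℕ × ℕ)) ⊆ Finset.HasAntidiagonal.antidiagonal k := by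
    intro p hp
    simp only [Finset.mem_insert, Finset.mem_singleton] at hp
    rcases hp with hp | hp <;> subst hp <;> simp [Finset.HasAntidiagonal.mem_antidiagonal] <;> omega
  calc m.choose i * n.choose (k - i) + m.choose j * n.choose (k - j)
      = ∑ p ∈ ({(i, k - i), (j, k - j)} : Finset (ℕ × ℕ)), m.choose p.1 * n.choose p.2 := by
        rw [Finset.sum_pair (by simp [hne])]
    _ ≤ _ := Finset.sum_le_sum_of_subset hsub

private lemma three_term (m n k i j l : ℕ) (hi : i ≤ k) (hj : j ≤ k) (hl : l ≤ k)
    (hij : i ≠ j) (hil : i ≠ l) (hjl : j ≠ l) :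
    m.choose i * n.choose (k - i) + m.choose j * n.choose (k - j)
      + m.choose l * n.choose (k - l) ≤ (m + n).choose k := by
  rw [Nat.add_choose_eq]
  have hsub : ({(i, k - i), (j, k - j), (l, k - l)} : Finset (ℕ × ℕ))
      ⊆ Finset.HasAntidiagonal.antidiagonal k := by
    intro p hp
    simp only [Finset.mem_insert, Finset.mem_singleton] at hp
    rcases hp with hp | hp | hp <;> subst hp <;> simp [Finset.HasAntidiagonal.mem_antidiagonal] <;> omega
  have hnm1 : ((i, k - i) : ℕ × ℕ) ∉ ({(j, k - j), (l, k - l)} : Finset (ℕ × ℕ)) := by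
    simp [Prod.ext_iff, hij, hil]
  calc m.choose i * n.choose (k - i) + m.choose j * n.choose (k - j)
        + m.choose l * n.choose (k - l)
      = ∑ p ∈ ({(i, k - i), (j, k - j), (l, k - l)} : Finset (ℕ × ℕ)),
          m.choose p.1 * n.choose p.2 := by
        rw [Finset.sum_insert hnm1, Finset.sum_pair (by simp [Prod.ext_iff, hjl])]
        ring
    _ ≤ _ := Finset.sum_le_sum_of_subset hsub

private lemma half_le (a : ℕ) (ha : 1 ≤ a) : (2 * a).choose a ≤ 2 * (2 * a).choose (a + 1) := by
  have h := Nat.choose_succ_right_eq (2 * a) a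
  have h2 : 2 * a - a = a := by omega
  rw [h2] at h
  have hpos : 0 < a + 1 := Nat.succ_pos a
  refine Nat.le_of_mul_le_mul_right ?_ hpos
  calc (2 * a).choose a * (a + 1) ≤ (2 * a).choose a * (2 * a) := by
        exact Nat.mul_le_mul_left _ (by omega)
    _ = 2 * ((2 * a).choose a * a) := by ring
    _ = 2 * ((2 * a).choose (a + 1) * (a + 1)) := by rw [h]
    _ = 2 * (2 * a).choose (a + 1) * (a + 1) := by ring

private lemma key_even_odd (a b : ℕ) (ha : 1 ≤ a) :
    3 * ((2 * a).choose a * (2 * b + 1).choose b) ≤ 2 * (2 * a + (2 * b + 1)).choose (a + b) := by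
  have h2 := two_term (2 * a) (2 * b + 1) (a + b) (a - 1) a (by omega) (by omega) (by omega)
  have hs1 : (2 * a).choose (a - 1) = (2 * a).choose (a + 1) := by
    have := Nat.choose_symm (show a + 1 ≤ 2 * a by omega)
    have h3 : 2 * a - (a + 1) = a - 1 := by omega
    rw [h3] at this; exact this
  have hs2 : (2 * b + 1).choose (a + b - (a - 1)) = (2 * b + 1).choose b := by
    have h4 : a + b - (a - 1) = b + 1 := by omega
    rw [h4]
    have := Nat.choose_symm (show b + 1 ≤ 2 * b + 1 by omega)
    have h5 : 2 * b + 1 - (b + 1) = b := by omega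
    rw [h5] at this; exact this.symm
  have h6 : a + b - a = b := by omega
  rw [hs1, hs2, h6] at h2
  have hh := half_le a ha
  nlinarith [h2, Nat.mul_le_mul_right ((2 * b + 1).choose b) hh]

private lemma key (m n : ℕ) (hm : 1 ≤ m) (hn : 1 ≤ n) :
    3 * (m.choose (m / 2) * n.choose (n / 2)) ≤ 2 * (m + n).choose ((m + n) / 2) := by
  rcases Nat.even_or_odd m with ⟨a, hma⟩ | ⟨a, hma⟩ <;>
    rcases Nat.even_or_odd n with ⟨b, hnb⟩ | ⟨b, hnb⟩
  · -- both even
    subst hma hnb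
    have ha : 1 ≤ a := by omega
    have hb : 1 ≤ b := by omega
    have hdiv1 : (a + a) / 2 = a := by omega
    have hdiv2 : (b + b) / 2 = b := by omega
    have hdiv3 : (a + a + (b + b)) / 2 = a + b := by omega
    rw [hdiv1, hdiv2, hdiv3]
    have h3 := three_term (a + a) (b + b) (a + b) (a - 1) a (a + 1)
      (by omega) (by omega) (by omega) (by omega) (by omega) (by omega)
    have e1 : (a + a).choose (a - 1) = (a + a).choose (a + 1) := by
      have := Nat.choose_symm (show a + 1 ≤ a + a by omega)
      have h' : a + a - (a + 1) = a - 1 := by omega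
      rw [h'] at this; exact this
    have e2 : (b + b).choose (a + b - (a - 1)) = (b + b).choose (b + 1) := by
      have h' : a + b - (a - 1) = b + 1 := by omega
      rw [h']
    have e3 : (b + b).choose (a + b - (a + 1)) = (b + b).choose (b + 1) := by
      have h' : a + b - (a + 1) = b - 1 := by omega
      rw [h']
      have := Nat.choose_symm (show b + 1 ≤ b + b by omega)
      have h'' : b + b - (b + 1) = b - 1 := by omega
      rw [h''] at this; exact this
    have e4 : a + b - a = b := by omega
    rw [e1, e2, e3, e4] at h3
    have ha2 : (a + a).choose a ≤ 2 * (a + a).choose (a + 1) := by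
      have := half_le a ha; rw [two_mul] at this; exact this
    have hb2 : (b + b).choose b ≤ 2 * (b + b).choose (b + 1) := by
      have := half_le b hb; rw [two_mul] at this; exact this
    have hmul : (a + a).choose a * ((b + b).choose b) ≤
        (2 * (a + a).choose (a + 1)) * (2 * (b + b).choose (b + 1)) :=
      Nat.mul_le_mul ha2 hb2
    nlinarith [h3, hmul]
  · -- m even, n odd
    subst hma hnb
    have ha : 1 ≤ a := by omega
    have h := key_even_odd a b ha
    have e1 : (a + a) / 2 = a := by omega
    have e2 : (2 * b + 1) / 2 = b := by omega
    have e3 : (a + a + (2 * b + 1)) / 2 = a + b := by omega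
    rw [e1, e2, e3]
    rw [two_mul] at h
    convert h using 3 <;> omega
  · -- m odd, n even
    subst hma hnb
    have hb : 1 ≤ b := by omega
    have h := key_even_odd b a hb
    have e1 : (2 * a + 1) / 2 = a := by omega
    have e2 : (b + b) / 2 = b := by omega
    have e3 : (2 * a + 1 + (b + b)) / 2 = a + b := by omega
    rw [e1, e2, e3]
    rw [two_mul] at h
    calc 3 * ((2 * a + 1).choose a * (b + b).choose b)
        = 3 * ((b + b).choose b * (2 * a + 1).choose a) := by ring
      _ ≤ 2 * (b + b + (2 * a + 1)).choose (b + a) := h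
      _ = 2 * (2 * a + 1 + (b + b)).choose (a + b) := by rw [Nat.add_comm (b + b), Nat.add_comm b a]
  · -- both odd
    subst hma hnb
    have e1 : (2 * a + 1) / 2 = a := by omega
    have e2 : (2 * b + 1) / 2 = b := by omega
    have e3 : (2 * a + 1 + (2 * b + 1)) / 2 = a + b + 1 := by omega
    rw [e1, e2, e3]
    have h2 := two_term (2 * a + 1) (2 * b + 1) (a + b + 1) a (a + 1)
      (by omega) (by omega) (by omega)
    have f1 : a + b + 1 - a = b + 1 := by omega
    have f2 : a + b + 1 - (a + 1) = b := by omega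
    have f3 : (2 * b + 1).choose (b + 1) = (2 * b + 1).choose b := by
      have := Nat.choose_symm (show b + 1 ≤ 2 * b + 1 by omega)
      have h' : 2 * b + 1 - (b + 1) = b := by omega
      rw [h'] at this; exact this.symm
    have f4 : (2 * a + 1).choose (a + 1) = (2 * a + 1).choose a := by
      have := Nat.choose_symm (show a + 1 ≤ 2 * a + 1 by omega)
      have h' : 2 * a + 1 - (a + 1) = a := by omega
      rw [h'] at this; exact this.symm
    rw [f1, f2, f3, f4] at h2
    omega

/-- For positive integers `d1, d2`:
`C(d1,⌊d1/2⌋) · C(d2,⌊d2/2⌋) ≤ (2/3) · C(d1+d2,⌊(d1+d2)/2⌋)`. -/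
theorem central_binomial_product_bound (d1 d2 : ℕ) (h1 : 1 ≤ d1) (h2 : 1 ≤ d2) :
    (d1.choose (d1 / 2) * d2.choose (d2 / 2) : ℝ) ≤
      (2 / 3) * ((d1 + d2).choose ((d1 + d2) / 2)) := by
  have h := key d1 d2 h1 h2
  have h' : (3 : ℝ) * (d1.choose (d1 / 2) * d2.choose (d2 / 2)) ≤
      2 * (d1 + d2).choose ((d1 + d2) / 2) := by
    exact_mod_cast h
  linarith
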